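/- Let K ≥ 2, n ≥ 1, N = Kn, d ≥ 1, τ > 0. For every W, Δ_W ∈ ℝ^{d×K} and H, Δ_H ∈ ℝ^{d×N}, the function φ(t) = f(W + tΔ_W, H + tΔ_H) is twice differentiable at t = 0, and φ''(0) = (1/N)∑_{j=1}^N [ ε_jᵀ diag(η(m_j)) ε_j − (η(m_j)ᵀ ε_j)² ] + 2τ ⟨G, Δ_WᵀΔ_H⟩_F, where m_j is the j-th column of τWᵀH and ε_j is the j-th column of τ(WᵀΔ_H + Δ_WᵀH). -/

import Mathlib

open scoped BigOperators Matrix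

/-- Cross-entropy loss: `L_CE(z,k) = log (∑_ℓ exp (z_ℓ)) − z_k`. -/
noncomputable def LCE {K : ℕ} (z : Fin K → ℝ) (k : Fin K) : ℝ :=
  Real.log (∑ ℓ, Real.exp (z ℓ)) - z k

/-- The cross-entropy risk `f(W,H) = (1/N) ∑_k ∑_i L_CE(τ Wᵀ h_{k,i}, k)` with `N = K n`. -/
noncomputable def ceRisk {d K n : ℕ} (τ : ℝ) (W : Matrix (Fin d) (Fin K) ℝ)
    (H : Matrix (Fin d) (Fin K × Fin n) ℝ) : ℝ :=
  (1 / ((K : ℝ) * n)) * ∑ k : Fin K, ∑ i : Fin n,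
    LCE (fun ℓ => τ * ∑ r, W r ℓ * H r (k, i)) k

/-- The softmax map `η(z)_j = exp(z_j) / ∑_ℓ exp(z_ℓ)`. -/
noncomputable def softmax {K : ℕ} (z : Fin K → ℝ) (j : Fin K) : ℝ :=
  Real.exp (z j) / ∑ ℓ, Real.exp (z ℓ)

/-- The logits `m_j = τ Wᵀ h_j` for the column `j = (k,i)` of `H`. -/
noncomputable def logits {d K n : ℕ} (τ : ℝ) (W : Matrix (Fin d) (Fin K) ℝ)
    (H : Matrix (Fin d) (Fin K × Fin n) ℝ) (j : Fin K × Fin n) : Fin K → ℝ :=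
  fun ℓ => τ * ∑ r, W r ℓ * H r j

/-- The gradient matrix `G`: its column indexed by `(k,i)` is `(1/N)(η(τ Wᵀ h_{k,i}) − e_k)`. -/
noncomputable def Gmat {d K n : ℕ} (τ : ℝ) (W : Matrix (Fin d) (Fin K) ℝ)
    (H : Matrix (Fin d) (Fin K × Fin n) ℝ) : Matrix (Fin K) (Fin K × Fin n) ℝ :=
  fun ℓ j => (1 / ((K : ℝ) * n)) * (softmax (logits τ W H j) ℓ - if ℓ = j.1 then 1 else 0)

/-- `ε_j`: the `j`-th column of `τ (Wᵀ Δ_H + Δ_Wᵀ H)`. -/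
noncomputable def epsCol {d K n : ℕ} (τ : ℝ) (W ΔW : Matrix (Fin d) (Fin K) ℝ)
    (H ΔH : Matrix (Fin d) (Fin K × Fin n) ℝ) (j : Fin K × Fin n) (ℓ : Fin K) : ℝ :=
  τ * ((∑ r, W r ℓ * ΔH r j) + ∑ r, ΔW r ℓ * H r j)

/- ====== Auxiliary machinery ====== -/

noncomputable def Fgen {K : ℕ} (a b c : Fin K → ℝ) (k : Fin K) (t : ℝ) : ℝ :=
  Real.log (∑ ℓ, Real.exp (a ℓ + t * b ℓ + t ^ 2 * c ℓ)) - (a k + t * b k + t ^ 2 * c k)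

noncomputable def Dgen {K : ℕ} (a b c : Fin K → ℝ) (k : Fin K) (t : ℝ) : ℝ :=
  (∑ ℓ, Real.exp (a ℓ + t * b ℓ + t ^ 2 * c ℓ) * (b ℓ + 2 * t * c ℓ)) /
    (∑ ℓ, Real.exp (a ℓ + t * b ℓ + t ^ 2 * c ℓ)) - (b k + 2 * t * c k)

lemma hq_aux {K : ℕ} (a b c : Fin K → ℝ) (ℓ : Fin K) (t : ℝ) :
    HasDerivAt (fun t : ℝ => a ℓ + t * b ℓ + t ^ 2 * c ℓ) (b ℓ + 2 * t * c ℓ) t := by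
  have h : HasDerivAt (fun t : ℝ => a ℓ + t * b ℓ + t ^ 2 * c ℓ)
      (0 + 1 * b ℓ + ((2 : ℕ) * t ^ (2 - 1)) * c ℓ) t :=
    ((hasDerivAt_const t (a ℓ)).add ((hasDerivAt_id t).mul_const (b ℓ))).add
      ((hasDerivAt_pow 2 t).mul_const (c ℓ))
  convert h using 1
  push_cast; ring

lemma Spos_aux {K : ℕ} (hK : 0 < K) (a b c : Fin K → ℝ) (t : ℝ) :
    0 < ∑ ℓ, Real.exp (a ℓ + t * b ℓ + t ^ 2 * c ℓ) := by
  haveI : Nonempty (Fin K) := Fin.pos_iff_nonempty.mp hK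
  exact Finset.sum_pos (fun ℓ _ => Real.exp_pos _) Finset.univ_nonempty

lemma hS_aux {K : ℕ} (a b c : Fin K → ℝ) (t : ℝ) :
    HasDerivAt (fun t : ℝ => ∑ ℓ, Real.exp (a ℓ + t * b ℓ + t ^ 2 * c ℓ))
      (∑ ℓ, Real.exp (a ℓ + t * b ℓ + t ^ 2 * c ℓ) * (b ℓ + 2 * t * c ℓ)) t :=
  HasDerivAt.fun_sum (fun ℓ _ => (hq_aux a b c ℓ t).exp)

lemma hF_aux {K : ℕ} (hK : 0 < K) (a b c : Fin K → ℝ) (k : Fin K) (t : ℝ) :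
    HasDerivAt (Fgen a b c k) (Dgen a b c k t) t :=
  ((hS_aux a b c t).log (ne_of_gt (Spos_aux hK a b c t))).sub (hq_aux a b c k t)

lemma hD_aux {K : ℕ} (hK : 0 < K) (a b c : Fin K → ℝ) (k : Fin K) :
    HasDerivAt (Dgen a b c k)
      ((∑ ℓ, softmax a ℓ * (b ℓ) ^ 2) - (∑ ℓ, softmax a ℓ * b ℓ) ^ 2
        + (2 * (∑ ℓ, softmax a ℓ * c ℓ) - 2 * c k)) 0 := by
  have hS0 := hS_aux a b c 0
  have hpos := Spos_aux hK a b c 0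
  have hS' : HasDerivAt
      (fun t : ℝ => ∑ ℓ, Real.exp (a ℓ + t * b ℓ + t ^ 2 * c ℓ) * (b ℓ + 2 * t * c ℓ))
      (∑ ℓ, (Real.exp (a ℓ + 0 * b ℓ + 0 ^ 2 * c ℓ) * (b ℓ + 2 * 0 * c ℓ) * (b ℓ + 2 * 0 * c ℓ)
        + Real.exp (a ℓ + 0 * b ℓ + 0 ^ 2 * c ℓ) * (2 * c ℓ))) 0 := by
    refine HasDerivAt.fun_sum (fun ℓ _ => ?_)
    have h2 : HasDerivAt (fun t : ℝ => b ℓ + 2 * t * c ℓ) (2 * c ℓ) 0 := by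
      have h : HasDerivAt (fun t : ℝ => b ℓ + 2 * t * c ℓ) (0 + 2 * 1 * c ℓ) 0 :=
        (hasDerivAt_const 0 (b ℓ)).add ((((hasDerivAt_id (0:ℝ)).const_mul 2)).mul_const (c ℓ))
      convert h using 1; ring
    exact ((hq_aux a b c ℓ 0).exp).mul h2
  have hdiv := hS'.div hS0 (ne_of_gt hpos)
  have hlin : HasDerivAt (fun t : ℝ => b k + 2 * t * c k) (2 * c k) 0 := by
    have h : HasDerivAt (fun t : ℝ => b k + 2 * t * c k) (0 + 2 * 1 * c k) 0 :=
      (hasDerivAt_const 0 (b k)).add ((((hasDerivAt_id (0:ℝ)).const_mul 2)).mul_const (c k))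
    convert h using 1; ring
  have := hdiv.sub hlin
  refine this.congr_deriv ?_
  have hSv : (∑ ℓ, Real.exp (a ℓ + 0 * b ℓ + 0 ^ 2 * c ℓ)) = ∑ ℓ, Real.exp (a ℓ) := by
    simp
  have hS'v : (∑ ℓ, Real.exp (a ℓ + 0 * b ℓ + 0 ^ 2 * c ℓ) * (b ℓ + 2 * 0 * c ℓ))
      = ∑ ℓ, Real.exp (a ℓ) * b ℓ := by simp
  have hS''v : (∑ ℓ, (Real.exp (a ℓ + 0 * b ℓ + 0 ^ 2 * c ℓ) * (b ℓ + 2 * 0 * c ℓ) * (b ℓ + 2 * 0 * c ℓ)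
        + Real.exp (a ℓ + 0 * b ℓ + 0 ^ 2 * c ℓ) * (2 * c ℓ)))
      = (∑ ℓ, Real.exp (a ℓ) * (b ℓ)^2) + 2 * ∑ ℓ, Real.exp (a ℓ) * c ℓ := by
    rw [Finset.sum_add_distrib, Finset.mul_sum]
    congr 1
    · exact Finset.sum_congr rfl fun ℓ _ => by simp; ring
    · exact Finset.sum_congr rfl fun ℓ _ => by simp; ring
  rw [hSv, hS'v, hS''v]
  have hSne : (∑ ℓ, Real.exp (a ℓ)) ≠ 0 := by rw [← hSv]; exact ne_of_gt hpos
  have hsm : ∀ (u : Fin K → ℝ),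
      (∑ ℓ, softmax a ℓ * u ℓ) = (∑ ℓ, Real.exp (a ℓ) * u ℓ) / (∑ ℓ, Real.exp (a ℓ)) := by
    intro u
    rw [Finset.sum_div]
    exact Finset.sum_congr rfl fun ℓ _ => by rw [softmax]; ring
  rw [hsm (fun ℓ => (b ℓ)^2), hsm b, hsm c]
  field_simp
  ring

theorem second_derivative_of_ceRisk_along_line (d K n : ℕ) (hK : 2 ≤ K) (hn : 1 ≤ n)
    (hd : 1 ≤ d) (τ : ℝ) (hτ : 0 < τ)
    (W ΔW : Matrix (Fin d) (Fin K) ℝ) (H ΔH : Matrix (Fin d) (Fin K × Fin n) ℝ) :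
    DifferentiableAt ℝ (fun t : ℝ => ceRisk τ (W + t • ΔW) (H + t • ΔH)) 0 ∧
    DifferentiableAt ℝ (deriv fun t : ℝ => ceRisk τ (W + t • ΔW) (H + t • ΔH)) 0 ∧
    deriv (deriv fun t : ℝ => ceRisk τ (W + t • ΔW) (H + t • ΔH)) 0
      = (1 / ((K : ℝ) * n)) * (∑ j : Fin K × Fin n,
          ((∑ ℓ, softmax (logits τ W H j) ℓ * (epsCol τ W ΔW H ΔH j ℓ) ^ 2)
            - (∑ ℓ, softmax (logits τ W H j) ℓ * epsCol τ W ΔW H ΔH j ℓ) ^ 2))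
        + 2 * τ * ∑ ℓ : Fin K, ∑ j : Fin K × Fin n,
            Gmat τ W H ℓ j * (∑ r, ΔW r ℓ * ΔH r j) := by
  have hK0 : 0 < K := lt_of_lt_of_le two_pos hK
  set μ : ℝ := 1 / ((K : ℝ) * n) with hμ
  set A : Fin K × Fin n → Fin K → ℝ := fun j => logits τ W H j with hA
  set B : Fin K × Fin n → Fin K → ℝ := fun j => epsCol τ W ΔW H ΔH j with hB
  set C : Fin K × Fin n → Fin K → ℝ := fun j ℓ => τ * ∑ r, ΔW r ℓ * ΔH r j with hC
  have hEq : (fun t : ℝ => ceRisk τ (W + t • ΔW) (H + t • ΔH))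
      = fun t => μ * ∑ k : Fin K, ∑ i : Fin n, Fgen (A (k, i)) (B (k, i)) (C (k, i)) k t := by
    funext t
    unfold ceRisk
    rw [← hμ]
    congr 1
    refine Finset.sum_congr rfl fun k _ => Finset.sum_congr rfl fun i _ => ?_
    have hz : ∀ ℓ, τ * ∑ r, (W + t • ΔW) r ℓ * (H + t • ΔH) r (k, i)
        = A (k, i) ℓ + t * B (k, i) ℓ + t ^ 2 * C (k, i) ℓ := by
      intro ℓ
      simp only [hA, hB, hC, Matrix.add_apply, Matrix.smul_apply, smul_eq_mul, logits, epsCol]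
      have h : ∑ r, (W r ℓ + t * ΔW r ℓ) * (H r (k, i) + t * ΔH r (k, i))
          = (∑ r, W r ℓ * H r (k, i))
            + t * ((∑ r, W r ℓ * ΔH r (k, i)) + ∑ r, ΔW r ℓ * H r (k, i))
            + t ^ 2 * ∑ r, ΔW r ℓ * ΔH r (k, i) := by
        calc ∑ r, (W r ℓ + t * ΔW r ℓ) * (H r (k, i) + t * ΔH r (k, i))
            = ∑ r, (W r ℓ * H r (k, i)
              + t * (W r ℓ * ΔH r (k, i) + ΔW r ℓ * H r (k, i))
              + t ^ 2 * (ΔW r ℓ * ΔH r (k, i))) :=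
              Finset.sum_congr rfl fun r _ => by ring
          _ = _ := by
              rw [Finset.sum_add_distrib, Finset.sum_add_distrib, ← Finset.mul_sum,
                ← Finset.mul_sum, Finset.sum_add_distrib]
      rw [h]; ring
    simp only [LCE, Fgen, hz]
  have hder1 : ∀ t : ℝ, HasDerivAt
      (fun t => μ * ∑ k : Fin K, ∑ i : Fin n, Fgen (A (k, i)) (B (k, i)) (C (k, i)) k t)
      (μ * ∑ k : Fin K, ∑ i : Fin n, Dgen (A (k, i)) (B (k, i)) (C (k, i)) k t) t := by
    intro t
    exact (HasDerivAt.fun_sum fun k _ => HasDerivAt.fun_sum fun i _ =>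
      hF_aux hK0 (A (k, i)) (B (k, i)) (C (k, i)) k t).const_mul μ
  have hderiv : deriv (fun t : ℝ => ceRisk τ (W + t • ΔW) (H + t • ΔH))
      = fun t => μ * ∑ k : Fin K, ∑ i : Fin n, Dgen (A (k, i)) (B (k, i)) (C (k, i)) k t := by
    rw [hEq]
    funext t
    exact (hder1 t).deriv
  have hder2 : HasDerivAt
      (fun t => μ * ∑ k : Fin K, ∑ i : Fin n, Dgen (A (k, i)) (B (k, i)) (C (k, i)) k t)
      (μ * ∑ k : Fin K, ∑ i : Fin n,
        ((∑ ℓ, softmax (A (k, i)) ℓ * (B (k, i) ℓ) ^ 2)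
          - (∑ ℓ, softmax (A (k, i)) ℓ * B (k, i) ℓ) ^ 2
          + (2 * (∑ ℓ, softmax (A (k, i)) ℓ * C (k, i) ℓ) - 2 * C (k, i) k))) 0 :=
    (HasDerivAt.fun_sum fun k _ => HasDerivAt.fun_sum fun i _ =>
      hD_aux hK0 (A (k, i)) (B (k, i)) (C (k, i)) k).const_mul μ
  refine ⟨?_, ?_, ?_⟩
  · rw [hEq]; exact (hder1 0).differentiableAt
  · rw [hderiv]; exact hder2.differentiableAt
  · rw [hderiv, hder2.deriv]
    have hprod : ∀ (F : Fin K × Fin n → ℝ),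
        (∑ k : Fin K, ∑ i : Fin n, F (k, i)) = ∑ j : Fin K × Fin n, F j := by
      intro F; exact (Fintype.sum_prod_type F).symm
    rw [hprod (fun j => (∑ ℓ, softmax (A j) ℓ * (B j ℓ) ^ 2)
          - (∑ ℓ, softmax (A j) ℓ * B j ℓ) ^ 2
          + (2 * (∑ ℓ, softmax (A j) ℓ * C j ℓ) - 2 * C j j.1))]
    have hG : ∀ j : Fin K × Fin n,
        (∑ ℓ, Gmat τ W H ℓ j * (∑ r, ΔW r ℓ * ΔH r j))
          = μ * ((∑ ℓ, softmax (A j) ℓ * (∑ r, ΔW r ℓ * ΔH r j)) - ∑ r, ΔW r j.1 * ΔH r j) := by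
      intro j
      simp only [Gmat, ← hμ, hA]
      have h1 : (∑ ℓ, (if ℓ = j.1 then (1:ℝ) else 0) * (∑ r, ΔW r ℓ * ΔH r j))
          = ∑ r, ΔW r j.1 * ΔH r j := by
        simp [ite_mul, Finset.sum_ite_eq']
      calc (∑ ℓ, μ * (softmax (logits τ W H j) ℓ - if ℓ = j.1 then 1 else 0)
              * (∑ r, ΔW r ℓ * ΔH r j))
          = μ * ∑ ℓ, ((softmax (logits τ W H j) ℓ * (∑ r, ΔW r ℓ * ΔH r j))
              - (if ℓ = j.1 then (1:ℝ) else 0) * (∑ r, ΔW r ℓ * ΔH r j)) := by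
            rw [Finset.mul_sum]
            exact Finset.sum_congr rfl fun ℓ _ => by ring
        _ = μ * ((∑ ℓ, softmax (logits τ W H j) ℓ * (∑ r, ΔW r ℓ * ΔH r j))
              - ∑ ℓ, (if ℓ = j.1 then (1:ℝ) else 0) * (∑ r, ΔW r ℓ * ΔH r j)) := by
            rw [Finset.sum_sub_distrib]
        _ = _ := by rw [h1]
    rw [Finset.sum_comm]
    have hGsum : (∑ j : Fin K × Fin n, ∑ ℓ, Gmat τ W H ℓ j * (∑ r, ΔW r ℓ * ΔH r j))
        = ∑ j : Fin K × Fin n,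
            μ * ((∑ ℓ, softmax (A j) ℓ * (∑ r, ΔW r ℓ * ΔH r j)) - ∑ r, ΔW r j.1 * ΔH r j) :=
      Finset.sum_congr rfl fun j _ => hG j
    rw [hGsum]
    rw [Finset.mul_sum, Finset.mul_sum, Finset.mul_sum, ← Finset.sum_add_distrib]
    refine Finset.sum_congr rfl fun j _ => ?_
    have hCval : ∀ ℓ, C j ℓ = τ * ∑ r, ΔW r ℓ * ΔH r j := fun ℓ => rfl
    have hCsum : (∑ ℓ, softmax (A j) ℓ * C j ℓ)
        = τ * ∑ ℓ, softmax (A j) ℓ * (∑ r, ΔW r ℓ * ΔH r j) := by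
      rw [Finset.mul_sum]
      exact Finset.sum_congr rfl fun ℓ _ => by rw [hCval]; ring
    rw [hCsum, hCval j.1]
    ring
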